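/- Let I be the 15-element set of involutions of the alternating group A_5, and let M be the symmetric integer matrix indexed by I × I with entries M(g,g) = -4, and for g ≠ h: M(g,h) = 0 if gh has order 2, M(g,h) = 2 if gh has order 3, and M(g,h) = 1 if gh has order 5. Then det M = 2^24 · 3^6, and, viewed as a real symmetric matrix, M has exactly 1 positive eigenvalue and exactly 14 negative eigenvalues (counted with multiplicity); in particular M is nondegenerate of rank 15 and signature (1, 14). -/

import Mathlib

/-- The set of involutions (order-2 elements) of the alternating group `A₅`. -/
abbrev InvA5 : Type := {g : alternatingGroup (Fin 5) // orderOf g = 2}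

noncomputable instance : Fintype InvA5 := Fintype.ofFinite _
noncomputable instance : DecidableEq InvA5 := Classical.decEq _

/-- The intersection matrix of the 15 genus-2 curves on a Fano surface of type
`A₅`: diagonal entries `-4`; for `g ≠ h` the entry is `2` if `gh` has order 3,
`1` if `gh` has order 5, and `0` if `gh` has order 2. -/
noncomputable def a5Matrix : Matrix InvA5 InvA5 ℤ :=
  Matrix.of fun g h =>
    if g = h then -4
    else if orderOf (g.1 * h.1) = 3 then 2
    else if orderOf (g.1 * h.1) = 5 then 1
    else 0

/-- The same matrix viewed as a real matrix. -/
noncomputable def a5MatrixR : Matrix InvA5 InvA5 ℝ :=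
  a5Matrix.map (Int.cast : ℤ → ℝ)

set_option maxRecDepth 100000

namespace A5Aux

open Matrix Finset

def f : Fin 15 → Equiv.Perm (Fin 5) :=
![Equiv.swap 1 2 * Equiv.swap 3 4,
  Equiv.swap 1 3 * Equiv.swap 2 4,
  Equiv.swap 1 4 * Equiv.swap 2 3,
  Equiv.swap 0 1 * Equiv.swap 3 4,
  Equiv.swap 0 1 * Equiv.swap 2 3,
  Equiv.swap 0 1 * Equiv.swap 2 4,
  Equiv.swap 0 2 * Equiv.swap 3 4,
  Equiv.swap 0 2 * Equiv.swap 1 3,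
  Equiv.swap 0 2 * Equiv.swap 1 4,
  Equiv.swap 0 3 * Equiv.swap 2 4,
  Equiv.swap 0 3 * Equiv.swap 1 2,
  Equiv.swap 0 3 * Equiv.swap 1 4,
  Equiv.swap 0 4 * Equiv.swap 2 3,
  Equiv.swap 0 4 * Equiv.swap 1 2,
  Equiv.swap 0 4 * Equiv.swap 1 3]

def Mnum : Matrix (Fin 15) (Fin 15) ℤ :=
!![-4, 0, 0, 2, 1, 1, 2, 1, 1, 1, 2, 1, 1, 2, 1;
  0, -4, 0, 1, 1, 2, 1, 2, 1, 2, 1, 1, 1, 1, 2;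
  0, 0, -4, 1, 2, 1, 1, 1, 2, 1, 1, 2, 2, 1, 1;
  2, 1, 1, -4, 2, 2, 2, 1, 1, 1, 1, 0, 1, 1, 0;
  1, 1, 2, 2, -4, 2, 1, 0, 1, 1, 0, 1, 2, 1, 1;
  1, 2, 1, 2, 2, -4, 1, 1, 0, 2, 1, 1, 1, 0, 1;
  2, 1, 1, 2, 1, 1, -4, 2, 2, 0, 1, 1, 0, 1, 1;
  1, 2, 1, 1, 0, 1, 2, -4, 2, 1, 0, 1, 1, 1, 2;
  1, 1, 2, 1, 1, 0, 2, 2, -4, 1, 1, 2, 1, 0, 1;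
  1, 2, 1, 1, 1, 2, 0, 1, 1, -4, 2, 2, 0, 1, 1;
  2, 1, 1, 1, 0, 1, 1, 0, 1, 2, -4, 2, 1, 2, 1;
  1, 1, 2, 0, 1, 1, 1, 1, 2, 2, 2, -4, 1, 1, 0;
  1, 1, 2, 1, 2, 1, 0, 1, 1, 0, 1, 1, -4, 2, 2;
  2, 1, 1, 1, 1, 0, 1, 1, 0, 1, 2, 1, 2, -4, 2;
  1, 2, 1, 0, 1, 1, 1, 2, 1, 1, 1, 0, 2, 2, -4]

lemma f_sign : ∀ i, Equiv.Perm.sign (f i) = 1 := by decide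
lemma f_sq : ∀ i, (f i) ^ 2 = 1 := by decide
lemma f_ne_one : ∀ i, f i ≠ 1 := by decide
lemma f_inj : Function.Injective f := by decide

lemma f_surj_aux : ∀ σ : Equiv.Perm (Fin 5),
    Equiv.Perm.sign σ = 1 → σ ^ 2 = 1 → σ ≠ 1 → ∃ i, f i = σ := by decide

lemma entry_aux : ∀ i j : Fin 15, i ≠ j →
    Mnum i j = (if (f i * f j) ^ 3 = 1 then 2 else if (f i * f j) ^ 5 = 1 then 1 else 0) :=
  @of_decide_eq_true _ (@Fintype.decidableForallFintype _ _ (fun _ => Fintype.decidableForallFintype) _) rfl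

lemma diag_aux : ∀ i : Fin 15, Mnum i i = -4 := by decide

lemma mnum_symm : ∀ i j, Mnum i j = Mnum j i :=
  @of_decide_eq_true _ (@Fintype.decidableForallFintype _ _ (fun _ => Fintype.decidableForallFintype) _) rfl

lemma quartic :
    (Mnum + (-12 : ℤ) • 1) * (Mnum + (2 : ℤ) • 1) * (Mnum + (6 : ℤ) • 1) * (Mnum + (8 : ℤ) • 1)
      = 0 := by
  decide

lemma tr1 : Matrix.trace Mnum = -60 := by decide
lemma tr2 : Matrix.trace (Mnum * Mnum) = 600 := by decide
lemma tr3 : Matrix.trace (Mnum * Mnum * Mnum) = -1440 := by decide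

noncomputable def F : Fin 15 → InvA5 := fun i =>
  ⟨⟨f i, Equiv.Perm.mem_alternatingGroup.mpr (f_sign i)⟩,
    by rw [Subgroup.orderOf_mk]; exact orderOf_eq_prime (f_sq i) (f_ne_one i)⟩

lemma F_inj : Function.Injective F := by
  intro i j h
  exact f_inj (congrArg (fun g : InvA5 => g.1.1) h)

lemma F_surj : Function.Surjective F := by
  rintro ⟨⟨σ, hσ⟩, h2⟩
  rw [Subgroup.orderOf_mk] at h2
  have hs : σ ^ 2 = 1 := by rw [← h2]; exact pow_orderOf_eq_one σ
  have hne : σ ≠ 1 := by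
    intro e; rw [e, orderOf_one] at h2; exact absurd h2 (by norm_num)
  obtain ⟨i, hi⟩ := f_surj_aux σ (Equiv.Perm.mem_alternatingGroup.mp hσ) hs hne
  exact ⟨i, Subtype.ext (Subtype.ext hi)⟩

noncomputable def E : Fin 15 ≃ InvA5 := Equiv.ofBijective F ⟨F_inj, F_surj⟩

lemma key_entry (i j : Fin 15) : a5Matrix (F i) (F j) = Mnum i j := by
  by_cases h : i = j
  · subst h
    show (if F i = F i then (-4 : ℤ) else _) = Mnum i i
    rw [if_pos rfl, diag_aux]
  · haveI : Fact (Nat.Prime 3) := ⟨by norm_num⟩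
    haveI : Fact (Nat.Prime 5) := ⟨by norm_num⟩
    have hF : F i ≠ F j := fun e => h (F_inj e)
    have hj : f j * f j = 1 := by have := f_sq j; rwa [pow_two] at this
    have hne1 : f i * f j ≠ 1 := by
      intro e
      apply h
      apply f_inj
      rw [eq_inv_of_mul_eq_one_left e, inv_eq_of_mul_eq_one_left hj]
    have hco : orderOf ((F i).1 * (F j).1) = orderOf (f i * f j) :=
      (Subgroup.orderOf_coe ((F i).1 * (F j).1)).symm
    have e3 : (orderOf ((F i).1 * (F j).1) = 3) ↔ ((f i * f j) ^ 3 = 1) := by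
      rw [hco]
      exact ⟨fun h' => by have hp := pow_orderOf_eq_one (f i * f j); rwa [h'] at hp, fun h' => orderOf_eq_prime h' hne1⟩
    have e5 : (orderOf ((F i).1 * (F j).1) = 5) ↔ ((f i * f j) ^ 5 = 1) := by
      rw [hco]
      exact ⟨fun h' => by have hp := pow_orderOf_eq_one (f i * f j); rwa [h'] at hp, fun h' => orderOf_eq_prime h' hne1⟩
    show (if F i = F j then (-4 : ℤ)
        else if orderOf ((F i).1 * (F j).1) = 3 then 2
        else if orderOf ((F i).1 * (F j).1) = 5 then 1 else 0) = Mnum i j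
    rw [if_neg hF, entry_aux i j h]
    exact if_congr e3 rfl (if_congr e5 rfl rfl)

lemma a5_reindex : a5Matrix = (Matrix.reindex E E) Mnum := by
  ext g h
  rw [Matrix.reindex_apply, Matrix.submatrix_apply]
  conv_lhs => rw [← E.apply_symm_apply g, ← E.apply_symm_apply h]
  exact key_entry _ _

lemma a5R_reindex : a5MatrixR = (Matrix.reindex E E) (Mnum.map (Int.cast : ℤ → ℝ)) := by
  rw [a5MatrixR, a5_reindex]
  rfl

/-- abbreviation for the real numeric matrix -/
noncomputable def MnumR : Matrix (Fin 15) (Fin 15) ℝ := Mnum.map (Int.cast : ℤ → ℝ)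

noncomputable def φ : Matrix (Fin 15) (Fin 15) ℤ →+* Matrix (Fin 15) (Fin 15) ℝ :=
  (Int.castRingHom ℝ).mapMatrix

lemma MnumR_eq : MnumR = φ Mnum := rfl

lemma trace_MnumR_pow :
    MnumR.trace = -60 ∧ (MnumR * MnumR).trace = 600 ∧ (MnumR * MnumR * MnumR).trace = -1440 := by
  have key : ∀ A : Matrix (Fin 15) (Fin 15) ℤ, (φ A).trace = ((A.trace : ℤ) : ℝ) := by
    intro A
    simp [φ, Matrix.trace, Matrix.diag, RingHom.mapMatrix_apply, Matrix.map_apply]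
  refine ⟨?_, ?_, ?_⟩
  · rw [MnumR_eq, key, tr1]; norm_num
  · rw [MnumR_eq, ← _root_.map_mul, key, tr2]; norm_num
  · rw [MnumR_eq, ← _root_.map_mul, ← _root_.map_mul, key, tr3]; norm_num

lemma quarticR :
    (MnumR + (-12 : ℝ) • 1) * (MnumR + (2 : ℝ) • 1) * (MnumR + (6 : ℝ) • 1)
      * (MnumR + (8 : ℝ) • 1) = 0 := by
  have h := congrArg φ quartic
  simp only [_root_.map_mul, _root_.map_add, _root_.map_zsmul, _root_.map_one, _root_.map_zero] at h
  rw [MnumR_eq]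
  have c1 : ((-12 : ℤ) • (1 : Matrix (Fin 15) (Fin 15) ℝ)) = (-12 : ℝ) • 1 := by
    rw [← Int.cast_smul_eq_zsmul ℝ]; norm_num
  have c2 : ((2 : ℤ) • (1 : Matrix (Fin 15) (Fin 15) ℝ)) = (2 : ℝ) • 1 := by
    rw [← Int.cast_smul_eq_zsmul ℝ]; norm_num
  have c3 : ((6 : ℤ) • (1 : Matrix (Fin 15) (Fin 15) ℝ)) = (6 : ℝ) • 1 := by
    rw [← Int.cast_smul_eq_zsmul ℝ]; norm_num
  have c4 : ((8 : ℤ) • (1 : Matrix (Fin 15) (Fin 15) ℝ)) = (8 : ℝ) • 1 := by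
    rw [← Int.cast_smul_eq_zsmul ℝ]; norm_num
  rw [← c1, ← c2, ← c3, ← c4]
  exact h

noncomputable def ψ : Matrix (Fin 15) (Fin 15) ℝ ≃ₐ[ℝ] Matrix InvA5 InvA5 ℝ :=
  Matrix.reindexAlgEquiv ℝ ℝ E

lemma a5R_eq_psi : a5MatrixR = ψ MnumR := a5R_reindex

lemma trace_psi (A : Matrix (Fin 15) (Fin 15) ℝ) : (ψ A).trace = A.trace := by
  show ((Matrix.reindex E E) A).trace = A.trace
  rw [Matrix.reindex_apply]
  unfold Matrix.trace
  rw [← Equiv.sum_comp E.symm (fun i => A.diag i)]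
  rfl

lemma NR_quartic :
    (a5MatrixR + (-12 : ℝ) • 1) * (a5MatrixR + (2 : ℝ) • 1) * (a5MatrixR + (6 : ℝ) • 1)
      * (a5MatrixR + (8 : ℝ) • 1) = 0 := by
  have h1 : ∀ c : ℝ, a5MatrixR + c • 1 = ψ (MnumR + c • 1) := by
    intro c
    rw [_root_.map_add, _root_.map_smul, _root_.map_one, a5R_eq_psi]
  rw [h1, h1, h1, h1, ← _root_.map_mul, ← _root_.map_mul, ← _root_.map_mul, quarticR, _root_.map_zero]

lemma NR_traces :
    a5MatrixR.trace = -60 ∧ (a5MatrixR * a5MatrixR).trace = 600 ∧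
      (a5MatrixR * a5MatrixR * a5MatrixR).trace = -1440 := by
  obtain ⟨t1, t2, t3⟩ := trace_MnumR_pow
  refine ⟨?_, ?_, ?_⟩
  · rw [a5R_eq_psi, trace_psi, t1]
  · rw [a5R_eq_psi, ← _root_.map_mul, trace_psi, t2]
  · rw [a5R_eq_psi, ← _root_.map_mul, ← _root_.map_mul, trace_psi, t3]

lemma NR_herm : a5MatrixR.IsHermitian := by
  have hsym : ∀ i j : Fin 15, MnumR i j = MnumR j i := by
    intro i j
    show ((Mnum i j : ℤ) : ℝ) = ((Mnum j i : ℤ) : ℝ)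
    exact_mod_cast congrArg (fun z : ℤ => (z : ℝ)) (mnum_symm i j)
  show a5MatrixRᴴ = a5MatrixR
  ext g h
  rw [Matrix.conjTranspose_apply, star_trivial, a5R_reindex, Matrix.reindex_apply,
    Matrix.submatrix_apply, Matrix.submatrix_apply]
  exact hsym _ _


section Spectral

open scoped Classical

noncomputable def ev (hM : a5MatrixR.IsHermitian) : InvA5 → ℝ := hM.eigenvalues

lemma card15 : Fintype.card InvA5 = 15 :=
  (Fintype.card_congr E).symm.trans (Fintype.card_fin 15)

lemma nat_card_filter (p : InvA5 → Prop) [DecidablePred p] :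
    Nat.card {i // p i} = (Finset.univ.filter p).card := by
  rw [Nat.card_eq_fintype_card, Fintype.card_subtype]

variable (hM : a5MatrixR.IsHermitian)

lemma spec_sums :
    (∑ i, ev hM i = -60) ∧ (∑ i, ev hM i * ev hM i = 600) ∧
      (∑ i, ev hM i * ev hM i * ev hM i = -1440) := by
  set U : Matrix InvA5 InvA5 ℝ := (hM.eigenvectorUnitary : Matrix InvA5 InvA5 ℝ) with hUdef
  set D : Matrix InvA5 InvA5 ℝ := Matrix.diagonal (ev hM) with hDdef
  have hU : star U * U = 1 := Unitary.coe_star_mul_self hM.eigenvectorUnitary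
  have cancel : ∀ X : Matrix InvA5 InvA5 ℝ, star U * (U * X) = X := by
    intro X; rw [← Matrix.mul_assoc, hU, Matrix.one_mul]
  have keytr : ∀ B : Matrix InvA5 InvA5 ℝ, (U * B * star U).trace = B.trace := by
    intro B; rw [Matrix.trace_mul_comm, ← Matrix.mul_assoc, hU, Matrix.one_mul]
  have hD : Matrix.diagonal ((RCLike.ofReal : ℝ → ℝ) ∘ hM.eigenvalues) = D := by
    rw [RCLike.ofReal_real_eq_id, Function.id_comp]
    exact hDdef.symm
  have spec : a5MatrixR = U * D * star U := by
    have h := hM.spectral_theorem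
    rw [hD] at h
    exact h
  obtain ⟨t1, t2, t3⟩ := NR_traces
  have h2 : a5MatrixR * a5MatrixR = U * (D * D) * star U := by
    rw [spec]; simp only [Matrix.mul_assoc]; rw [cancel]
  have h3 : a5MatrixR * a5MatrixR * a5MatrixR = U * (D * D * D) * star U := by
    rw [spec]; simp only [Matrix.mul_assoc]; rw [cancel, cancel]
  refine ⟨?_, ?_, ?_⟩
  · rw [spec, keytr, hDdef, Matrix.trace_diagonal] at t1; exact t1
  · rw [h2, keytr, hDdef, Matrix.diagonal_mul_diagonal, Matrix.trace_diagonal] at t2; exact t2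
  · rw [h3, keytr, hDdef, Matrix.diagonal_mul_diagonal, Matrix.diagonal_mul_diagonal,
      Matrix.trace_diagonal] at t3
    exact t3

lemma roots : ∀ i, ev hM i = 12 ∨ ev hM i = -2 ∨ ev hM i = -6 ∨ ev hM i = -8 := by
  intro i
  have hv : a5MatrixR *ᵥ ⇑(hM.eigenvectorBasis i) = ev hM i • ⇑(hM.eigenvectorBasis i) :=
    hM.mulVec_eigenvectorBasis i
  set v : InvA5 → ℝ := ⇑(hM.eigenvectorBasis i) with hvdef
  have hfac : ∀ a : ℝ, (a5MatrixR + a • 1) *ᵥ v = (ev hM i + a) • v := by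
    intro a
    rw [Matrix.add_mulVec, Matrix.smul_mulVec, Matrix.one_mulVec, hv, ← add_smul]
  have w4 := hfac 8
  have w3 : (a5MatrixR + (6 : ℝ) • 1) *ᵥ ((a5MatrixR + (8 : ℝ) • 1) *ᵥ v)
      = ((ev hM i + 6) * (ev hM i + 8)) • v := by
    rw [w4, Matrix.mulVec_smul, hfac 6, smul_smul, mul_comm]
  have w2 : (a5MatrixR + (2 : ℝ) • 1) *ᵥ ((a5MatrixR + (6 : ℝ) • 1) *ᵥ
        ((a5MatrixR + (8 : ℝ) • 1) *ᵥ v))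
      = ((ev hM i + 2) * ((ev hM i + 6) * (ev hM i + 8))) • v := by
    rw [w3, Matrix.mulVec_smul, hfac 2, smul_smul, mul_comm]
  have w1 : (a5MatrixR + (-12 : ℝ) • 1) *ᵥ ((a5MatrixR + (2 : ℝ) • 1) *ᵥ
        ((a5MatrixR + (6 : ℝ) • 1) *ᵥ ((a5MatrixR + (8 : ℝ) • 1) *ᵥ v)))
      = ((ev hM i + -12) * ((ev hM i + 2) * ((ev hM i + 6) * (ev hM i + 8)))) • v := by
    rw [w2, Matrix.mulVec_smul, hfac (-12), smul_smul, mul_comm]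
  have hzero : ((ev hM i + -12) * ((ev hM i + 2) * ((ev hM i + 6) * (ev hM i + 8)))) • v = 0 := by
    rw [← w1, Matrix.mulVec_mulVec, Matrix.mulVec_mulVec, Matrix.mulVec_mulVec, NR_quartic,
      Matrix.zero_mulVec]
  have hvne : v ≠ 0 := by
    have hb := hM.eigenvectorBasis.orthonormal.ne_zero i
    intro h0
    apply hb
    ext g
    exact congrFun h0 g
  have hc := (smul_eq_zero.mp hzero).resolve_right hvne
  rcases mul_eq_zero.mp hc with h | h
  · left; linarith
  rcases mul_eq_zero.mp h with h | h
  · right; left; linarith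
  rcases mul_eq_zero.mp h with h | h
  · right; right; left; linarith
  · right; right; right; linarith

lemma fiber_cards :
    Nat.card {i // ev hM i = 12} = 1 ∧
    Nat.card {i // ev hM i = -2} = 5 ∧
    Nat.card {i // ev hM i = -6} = 5 ∧
    Nat.card {i // ev hM i = -8} = 4 := by
  obtain ⟨hT1, hT2, hT3⟩ := spec_sums hM
  simp only [nat_card_filter]
  have hcardU : (Finset.univ : Finset InvA5).card = 15 := by
    rw [Finset.card_univ, card15]
  refine ⟨?_, ?_, ?_, ?_⟩
  · have e : ∀ i ∈ Finset.univ, (ev hM i + 2) * ((ev hM i + 6) * (ev hM i + 8))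
        = if ev hM i = 12 then (5040 : ℝ) else 0 := by
      intro i _; rcases roots hM i with h | h | h | h <;> rw [h] <;> norm_num
    have hx : ∀ i ∈ Finset.univ, (ev hM i + 2) * ((ev hM i + 6) * (ev hM i + 8))
        = ev hM i * ev hM i * ev hM i + (16 * (ev hM i * ev hM i) + (76 * ev hM i + 96)) :=
      fun i _ => by ring
    have h1 : ∑ i, (ev hM i + 2) * ((ev hM i + 6) * (ev hM i + 8)) = 5040 := by
      rw [Finset.sum_congr rfl hx, Finset.sum_add_distrib, Finset.sum_add_distrib,
        Finset.sum_add_distrib, ← Finset.mul_sum, ← Finset.mul_sum, Finset.sum_const,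
        hT1, hT2, hT3, hcardU]
      norm_num
    rw [Finset.sum_congr rfl e, ← Finset.sum_filter, Finset.sum_const, nsmul_eq_mul] at h1
    have : (((Finset.univ.filter fun i => ev hM i = 12).card : ℝ)) = 1 := by linarith
    exact_mod_cast this
  · have e : ∀ i ∈ Finset.univ, (ev hM i - 12) * ((ev hM i + 6) * (ev hM i + 8))
        = if ev hM i = -2 then (-336 : ℝ) else 0 := by
      intro i _; rcases roots hM i with h | h | h | h <;> rw [h] <;> norm_num
    have hx : ∀ i ∈ Finset.univ, (ev hM i - 12) * ((ev hM i + 6) * (ev hM i + 8))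
        = ev hM i * ev hM i * ev hM i + (2 * (ev hM i * ev hM i) + (-120 * ev hM i + -576)) :=
      fun i _ => by ring
    have h1 : ∑ i, (ev hM i - 12) * ((ev hM i + 6) * (ev hM i + 8)) = -1680 := by
      rw [Finset.sum_congr rfl hx, Finset.sum_add_distrib, Finset.sum_add_distrib,
        Finset.sum_add_distrib, ← Finset.mul_sum, ← Finset.mul_sum, Finset.sum_const,
        hT1, hT2, hT3, hcardU]
      norm_num
    rw [Finset.sum_congr rfl e, ← Finset.sum_filter, Finset.sum_const, nsmul_eq_mul] at h1
    have : (((Finset.univ.filter fun i => ev hM i = -2).card : ℝ)) = 5 := by linarith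
    exact_mod_cast this
  · have e : ∀ i ∈ Finset.univ, (ev hM i - 12) * ((ev hM i + 2) * (ev hM i + 8))
        = if ev hM i = -6 then (144 : ℝ) else 0 := by
      intro i _; rcases roots hM i with h | h | h | h <;> rw [h] <;> norm_num
    have hx : ∀ i ∈ Finset.univ, (ev hM i - 12) * ((ev hM i + 2) * (ev hM i + 8))
        = ev hM i * ev hM i * ev hM i + (-2 * (ev hM i * ev hM i) + (-104 * ev hM i + -192)) :=
      fun i _ => by ring
    have h1 : ∑ i, (ev hM i - 12) * ((ev hM i + 2) * (ev hM i + 8)) = 720 := by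
      rw [Finset.sum_congr rfl hx, Finset.sum_add_distrib, Finset.sum_add_distrib,
        Finset.sum_add_distrib, ← Finset.mul_sum, ← Finset.mul_sum, Finset.sum_const,
        hT1, hT2, hT3, hcardU]
      norm_num
    rw [Finset.sum_congr rfl e, ← Finset.sum_filter, Finset.sum_const, nsmul_eq_mul] at h1
    have : (((Finset.univ.filter fun i => ev hM i = -6).card : ℝ)) = 5 := by linarith
    exact_mod_cast this
  · have e : ∀ i ∈ Finset.univ, (ev hM i - 12) * ((ev hM i + 2) * (ev hM i + 6))
        = if ev hM i = -8 then (-240 : ℝ) else 0 := by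
      intro i _; rcases roots hM i with h | h | h | h <;> rw [h] <;> norm_num
    have hx : ∀ i ∈ Finset.univ, (ev hM i - 12) * ((ev hM i + 2) * (ev hM i + 6))
        = ev hM i * ev hM i * ev hM i + (-4 * (ev hM i * ev hM i) + (-84 * ev hM i + -144)) :=
      fun i _ => by ring
    have h1 : ∑ i, (ev hM i - 12) * ((ev hM i + 2) * (ev hM i + 6)) = -960 := by
      rw [Finset.sum_congr rfl hx, Finset.sum_add_distrib, Finset.sum_add_distrib,
        Finset.sum_add_distrib, ← Finset.mul_sum, ← Finset.mul_sum, Finset.sum_const,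
        hT1, hT2, hT3, hcardU]
      norm_num
    rw [Finset.sum_congr rfl e, ← Finset.sum_filter, Finset.sum_const, nsmul_eq_mul] at h1
    have : (((Finset.univ.filter fun i => ev hM i = -8).card : ℝ)) = 4 := by linarith
    exact_mod_cast this

lemma prod_ev : ∏ i, ev hM i = 12230590464 := by
  obtain ⟨c12', c2', c6', c8'⟩ := fiber_cards hM
  have c12 := (nat_card_filter (fun i => ev hM i = 12)).symm.trans c12'
  have c2 := (nat_card_filter (fun i => ev hM i = -2)).symm.trans c2'
  have c6 := (nat_card_filter (fun i => ev hM i = -6)).symm.trans c6'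
  have c8 := (nat_card_filter (fun i => ev hM i = -8)).symm.trans c8'
  have step1 := (Finset.prod_filter_mul_prod_filter_not Finset.univ
    (fun i => ev hM i = 12) (ev hM)).symm
  have hs2 : (Finset.univ.filter fun i => ¬ ev hM i = 12).filter (fun i => ev hM i = -2)
      = Finset.univ.filter fun i => ev hM i = -2 := by
    rw [Finset.filter_filter]
    exact Finset.filter_congr fun i _ =>
      ⟨fun h => h.2, fun h => ⟨by rw [h]; norm_num, h⟩⟩
  have step2 := (Finset.prod_filter_mul_prod_filter_not
    (Finset.univ.filter fun i => ¬ ev hM i = 12) (fun i => ev hM i = -2) (ev hM)).symm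
  have hs3 : ((Finset.univ.filter fun i => ¬ ev hM i = 12).filter
        (fun i => ¬ ev hM i = -2)).filter (fun i => ev hM i = -6)
      = Finset.univ.filter fun i => ev hM i = -6 := by
    rw [Finset.filter_filter, Finset.filter_filter]
    exact Finset.filter_congr fun i _ =>
      ⟨fun h => h.2.2, fun h => ⟨by rw [h]; norm_num, by rw [h]; norm_num, h⟩⟩
  have step3 := (Finset.prod_filter_mul_prod_filter_not
    ((Finset.univ.filter fun i => ¬ ev hM i = 12).filter fun i => ¬ ev hM i = -2)
    (fun i => ev hM i = -6) (ev hM)).symm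
  have hs4 : (((Finset.univ.filter fun i => ¬ ev hM i = 12).filter
        (fun i => ¬ ev hM i = -2)).filter (fun i => ¬ ev hM i = -6))
      = Finset.univ.filter fun i => ev hM i = -8 := by
    rw [Finset.filter_filter, Finset.filter_filter]
    refine Finset.filter_congr fun i _ => ?_
    constructor
    · rintro ⟨h12, h2, h6⟩
      rcases roots hM i with h | h | h | h
      · exact absurd h h12
      · exact absurd h h2
      · exact absurd h h6
      · exact h
    · intro h
      exact ⟨by rw [h]; norm_num, by rw [h]; norm_num, by rw [h]; norm_num⟩
  have hconst : ∀ (r : ℝ), ∏ i ∈ (Finset.univ.filter fun i => ev hM i = r), ev hM i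
      = r ^ (Finset.univ.filter fun i => ev hM i = r).card := by
    intro r
    rw [Finset.prod_congr rfl fun i hi => (Finset.mem_filter.mp hi).2, Finset.prod_const]
  rw [step1, step2, step3, hs2, hs3, hs4, hconst 12, hconst (-2), hconst (-6), hconst (-8),
    c12, c2, c6, c8]
  norm_num

end Spectral

end A5Aux

/-- The intersection matrix of the 15 genus-2 curves on a Fano surface of type
`A₅` has determinant `2²⁴ · 3⁶` and, as a real symmetric matrix, exactly 1
positive and 14 negative eigenvalues: it is nondegenerate of rank 15 and
signature `(1, 14)`. -/
theorem a5Matrix_det_signature :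
    a5Matrix.det = 2 ^ 24 * 3 ^ 6 ∧
    a5MatrixR.IsHermitian ∧
    ∀ hM : a5MatrixR.IsHermitian,
      Nat.card {i : InvA5 // 0 < hM.eigenvalues i} = 1 ∧
      Nat.card {i : InvA5 // hM.eigenvalues i < 0} = 14 := by
  have hH := A5Aux.NR_herm
  refine ⟨?_, hH, ?_⟩
  · -- determinant
    have hdetR : a5MatrixR.det = 12230590464 := by
      have h := hH.det_eq_prod_eigenvalues
      simp only [RCLike.ofReal_real_eq_id, id_eq] at h
      rw [h]
      exact A5Aux.prod_ev hH
    have hmap := RingHom.map_det (Int.castRingHom ℝ) a5Matrix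
    simp only [RingHom.mapMatrix_apply, Int.coe_castRingHom] at hmap
    have hmap' : ((a5Matrix.det : ℤ) : ℝ) = a5MatrixR.det := hmap
    have : ((a5Matrix.det : ℤ) : ℝ) = ((2 ^ 24 * 3 ^ 6 : ℤ) : ℝ) := by
      rw [hmap', hdetR]; norm_num
    exact_mod_cast this
  · intro hM
    obtain ⟨c12, c2, c6, c8⟩ := A5Aux.fiber_cards hM
    have hiff : ∀ i, 0 < hM.eigenvalues i ↔ A5Aux.ev hM i = 12 := by
      intro i
      show 0 < A5Aux.ev hM i ↔ A5Aux.ev hM i = 12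
      rcases A5Aux.roots hM i with h | h | h | h <;> rw [h] <;> norm_num
    have hiffneg : ∀ i, hM.eigenvalues i < 0 ↔ ¬ A5Aux.ev hM i = 12 := by
      intro i
      show A5Aux.ev hM i < 0 ↔ ¬ A5Aux.ev hM i = 12
      rcases A5Aux.roots hM i with h | h | h | h <;> rw [h] <;> norm_num
    constructor
    · rw [Nat.card_congr (Equiv.subtypeEquivRight hiff)]
      exact c12
    · classical
      rw [Nat.card_congr (Equiv.subtypeEquivRight hiffneg)]
      rw [A5Aux.nat_card_filter (fun i => ¬ A5Aux.ev hM i = 12)]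
      have hkey := Finset.card_filter_add_card_filter_not
        (s := (Finset.univ : Finset InvA5)) (p := fun i => A5Aux.ev hM i = 12)
      have hc12 : (Finset.univ.filter fun i => A5Aux.ev hM i = 12).card = 1 :=
        (A5Aux.nat_card_filter (fun i => A5Aux.ev hM i = 12)).symm.trans c12
      rw [hc12, Finset.card_univ, A5Aux.card15] at hkey
      omega
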